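/- Let d ≥ 1 be an integer and let p be an odd prime. For every nonzero ξ = (ξ', ξ_{d+1}) ∈ (ℤ/pℤ)^d × (ℤ/pℤ): p^{−d} | Σ_{n ∈ [0,p−1]^d} e^{−2πi ( n·ξ' + |n|² ξ_{d+1} ) / p } | ≤ p^{−d/2}, where |n|² = Σ_{i=1}^d n_i² and n·ξ' = Σ_{i=1}^d n_i ξ'_i, all computed modulo p using representatives in {0,…,p−1}. -/

import Mathlib

open Finset AddChar Complex

private lemma addChar_map_sum {A M : Type*} [AddCommMonoid A] [CommMonoid M] (ψ : AddChar A M)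
    {ι : Type*} (s : Finset ι) (f : ι → A) : ψ (∑ i ∈ s, f i) = ∏ i ∈ s, ψ (f i) := by
  classical
  induction s using Finset.cons_induction with
  | empty => simp
  | cons a s ha ih => rw [Finset.sum_cons, Finset.prod_cons, AddChar.map_add_eq_mul, ih]

private lemma aux_prim {p : ℕ} (hp0 : p ≠ 0) :
    IsPrimitiveRoot (Complex.exp (-(2 * Real.pi * Complex.I) / p)) p := by
  have h := Complex.isPrimitiveRoot_exp p hp0
  have heq : Complex.exp (-(2 * Real.pi * Complex.I) / p)
      = (Complex.exp (2 * Real.pi * Complex.I / p))⁻¹ := by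
    rw [← Complex.exp_neg, neg_div]
  rw [heq]
  exact h.inv

private lemma quad_norm {p : ℕ} [hp : Fact p.Prime] (hp2 : p ≠ 2) {ψ : AddChar (ZMod p) ℂ}
    (hψ : ψ.IsPrimitive) (hnorm : ∀ x, ‖ψ x‖ = 1) (a b : ZMod p) (ha : a ≠ 0) :
    ‖∑ n : ZMod p, ψ (a * n ^ 2 + b * n)‖ = Real.sqrt p := by
  have hchar : ringChar (ZMod p) ≠ 2 := by
    rw [ZMod.ringChar_zmod_n]; exact hp2
  have h2 : (2 : ZMod p) ≠ 0 := Ring.two_ne_zero hchar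
  have h2a : (2 * a) ≠ 0 := mul_ne_zero h2 ha
  set t : ZMod p := b * (2 * a)⁻¹ with ht
  have hb : b = 2 * a * t := by
    rw [ht]; field_simp
  -- complete the square
  have step1 : ∑ n : ZMod p, ψ (a * n ^ 2 + b * n)
      = ψ (a * t ^ 2 - b * t) * ∑ m : ZMod p, ψ (a * m ^ 2) := by
    rw [Finset.mul_sum]
    refine Fintype.sum_equiv (Equiv.addRight t) _ _ fun n => ?_
    rw [← AddChar.map_add_eq_mul]
    congr 1
    simp only [Equiv.coe_addRight]
    rw [hb]; ring
  set χ : MulChar (ZMod p) ℂ := (quadraticChar (ZMod p)).ringHomComp (Int.castRingHom ℂ) with hχ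
  have hq : χ.IsQuadratic := (quadraticChar_isQuadratic (ZMod p)).comp _
  have hχ1 : χ ≠ 1 :=
    (MulChar.ringHomComp_ne_one_iff Int.cast_injective).mpr (quadraticChar_ne_one hchar)
  have hχnorm : ∀ x : ZMod p, x ≠ 0 → ‖χ x‖ = 1 := by
    intro x hx
    rcases quadraticChar_dichotomy (F := ZMod p) hx with h | h <;>
      simp [hχ, MulChar.ringHomComp_apply, h]
  -- counting squares
  have hcount : ∑ m : ZMod p, ψ (a * m ^ 2)
      = ∑ x : ZMod p, (χ x + 1) * ψ (a * x) := by
    rw [← Finset.sum_fiberwise_of_maps_to' (g := fun m : ZMod p => m ^ 2)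
        (fun m _ => Finset.mem_univ (m ^ 2)) (fun x : ZMod p => ψ (a * x))]
    refine Finset.sum_congr rfl fun x _ => ?_
    rw [Finset.sum_const, nsmul_eq_mul, MulChar.ringHomComp_apply]
    congr 1
    have h := quadraticChar_card_sqrts hchar x
    have hset : ({m : ZMod p | m ^ 2 = x} : Set (ZMod p)).toFinset
        = Finset.univ.filter (fun m => m ^ 2 = x) := by
      ext m; simp
    rw [hset] at h
    rw [eq_intCast]
    exact_mod_cast h
  have hsplit : ∑ x : ZMod p, (χ x + 1) * ψ (a * x) = gaussSum χ (ψ.mulShift a) := by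
    simp_rw [add_mul, one_mul, Finset.sum_add_distrib]
    have hz : ∑ x : ZMod p, ψ (a * x) = 0 := by
      have := AddChar.sum_eq_zero_of_ne_one (hψ ha)
      simpa [AddChar.mulShift_apply] using this
    rw [hz, add_zero]
    simp [gaussSum, AddChar.mulShift_apply]
  -- norm of the Gauss sum
  have hgnorm : ‖gaussSum χ ψ‖ = Real.sqrt p := by
    have hsq := gaussSum_sq hχ1 hq hψ
    have hcard : (Fintype.card (ZMod p) : ℂ) = (p : ℂ) := by
      rw [ZMod.card]
    have hns : ‖gaussSum χ ψ‖ ^ 2 = (p : ℝ) := by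
      rw [← norm_pow, hsq, hcard, norm_mul, hχnorm (-1) (by
        simpa using neg_ne_zero.mpr (one_ne_zero (α := ZMod p))), one_mul,
        Complex.norm_natCast]
    rw [← Real.sqrt_sq (norm_nonneg (gaussSum χ ψ)), hns]
  have hshift : ‖gaussSum χ (ψ.mulShift a)‖ = ‖gaussSum χ ψ‖ := by
    have h := gaussSum_mulShift χ ψ (Units.mk0 a ha)
    have hval : ((Units.mk0 a ha : (ZMod p)ˣ) : ZMod p) = a := rfl
    rw [hval] at h
    rw [← h, norm_mul, hχnorm a ha, one_mul]
  rw [step1, norm_mul, hnorm _, one_mul, hcount, hsplit, hshift, hgnorm]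

/-- **Lemma (Gauss sum bound).**
Let `d ≥ 1` and let `p` be an odd prime.  For every nonzero
`ξ = (ξ', ξ_{d+1}) ∈ (ℤ/pℤ)^d × (ℤ/pℤ)`,
`p^{-d} |∑_{n ∈ [0,p-1]^d} e^{-2πi (n·ξ' + |n|² ξ_{d+1})/p}| ≤ p^{-d/2}`,
where `|n|² = ∑ᵢ nᵢ²` and `n·ξ' = ∑ᵢ nᵢ ξ'ᵢ`, computed with representatives in
`{0,…,p-1}`. -/
theorem gauss_sum_power_bound (d p : ℕ) (hd : 1 ≤ d) (hp : p.Prime) (hodd : Odd p)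
    (ξ' : Fin d → ZMod p) (ξd : ZMod p) (hξ : ¬(ξ' = 0 ∧ ξd = 0)) :
    ((p : ℝ) ^ d)⁻¹ *
        ‖∑ n ∈ Fintype.piFinset (fun _ : Fin d => Finset.range p),
            Complex.exp (-2 * Real.pi * Complex.I *
              ((((∑ i, n i * ((ξ' i).val)) + (∑ i, (n i) ^ 2) * ξd.val : ℕ)) : ℂ) / (p : ℂ))‖
      ≤ ((Real.sqrt p) ^ d)⁻¹ := by
  haveI : Fact p.Prime := ⟨hp⟩
  haveI : NeZero p := ⟨hp.pos.ne'⟩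
  have hp0 : p ≠ 0 := hp.pos.ne'
  have hp2 : p ≠ 2 := by
    rintro rfl
    exact (Nat.not_odd_iff_even.mpr even_two) hodd
  set ζ : ℂ := Complex.exp (-(2 * Real.pi * Complex.I) / p) with hζdef
  have hζ : IsPrimitiveRoot ζ p := aux_prim hp0
  set ψ : AddChar (ZMod p) ℂ := AddChar.zmodChar p hζ.pow_eq_one with hψdef
  have hψprim : ψ.IsPrimitive := AddChar.zmodChar_primitive_of_primitive_root p hζ
  have hζnorm : ‖ζ‖ = 1 := Complex.norm_eq_one_of_pow_eq_one hζ.pow_eq_one hp0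
  have hnorm : ∀ x : ZMod p, ‖ψ x‖ = 1 := by
    intro x
    rw [hψdef, AddChar.zmodChar_apply, norm_pow, hζnorm, one_pow]
  -- rewrite each exponential as ψ of a cast
  have hexp : ∀ N : ℕ,
      Complex.exp (-2 * Real.pi * Complex.I * (N : ℂ) / (p : ℂ)) = ψ ((N : ZMod p)) := by
    intro N
    rw [hψdef, AddChar.zmodChar_apply' hζ.pow_eq_one N, hζdef, ← Complex.exp_nat_mul]
    congr 1
    ring
  -- the value of the big sum factors
  have hfact : ∑ n ∈ Fintype.piFinset (fun _ : Fin d => Finset.range p),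
        Complex.exp (-2 * Real.pi * Complex.I *
          ((((∑ i, n i * ((ξ' i).val)) + (∑ i, (n i) ^ 2) * ξd.val : ℕ)) : ℂ) / (p : ℂ))
      = ∏ i : Fin d, ∑ y : ZMod p, ψ (ξd * y ^ 2 + ξ' i * y) := by
    have step : ∀ n : Fin d → ℕ,
        Complex.exp (-2 * Real.pi * Complex.I *
          ((((∑ i, n i * ((ξ' i).val)) + (∑ i, (n i) ^ 2) * ξd.val : ℕ)) : ℂ) / (p : ℂ))
        = ∏ i : Fin d, ψ (ξd * ((n i : ZMod p)) ^ 2 + ξ' i * (n i : ZMod p)) := by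
      intro n
      rw [hexp]
      rw [← addChar_map_sum]
      congr 1
      push_cast [ZMod.natCast_zmod_val, Finset.sum_mul]
      rw [← Finset.sum_add_distrib]
      refine Finset.sum_congr rfl fun i _ => ?_
      ring
    rw [Finset.sum_congr rfl fun n _ => step n]
    rw [← Finset.prod_univ_sum (fun _ : Fin d => Finset.range p)
      (fun i x => ψ (ξd * (x : ZMod p) ^ 2 + ξ' i * (x : ZMod p)))]
    refine Finset.prod_congr rfl fun i _ => ?_
    refine Finset.sum_bij' (fun x _ => (x : ZMod p)) (fun y _ => y.val)
      (fun x _ => Finset.mem_univ _) (fun y _ => Finset.mem_range.mpr (ZMod.val_lt y))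
      (fun x hx => by
        rw [ZMod.val_natCast, Nat.mod_eq_of_lt (Finset.mem_range.mp hx)])
      (fun y _ => ZMod.natCast_zmod_val y) (fun x _ => rfl)
  rw [hfact, norm_prod]
  by_cases hξd : ξd = 0
  · -- then ξ' ≠ 0 and one linear factor vanishes
    have hξ' : ξ' ≠ 0 := fun h => hξ ⟨h, hξd⟩
    obtain ⟨j, hj⟩ : ∃ j, ξ' j ≠ 0 := by
      by_contra h
      push_neg at h
      exact hξ' (funext fun i => h i)
    have hSj : ∑ y : ZMod p, ψ (ξd * y ^ 2 + ξ' j * y) = 0 := by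
      have := AddChar.sum_eq_zero_of_ne_one (hψprim hj)
      simpa [hξd, AddChar.mulShift_apply] using this
    rw [Finset.prod_eq_zero (Finset.mem_univ j) (by rw [hSj, norm_zero]), mul_zero]
    positivity
  · -- each factor has norm √p
    have heach : ∀ i : Fin d, ‖∑ y : ZMod p, ψ (ξd * y ^ 2 + ξ' i * y)‖ = Real.sqrt p :=
      fun i => quad_norm hp2 hψprim hnorm ξd (ξ' i) hξd
    rw [Finset.prod_congr rfl fun i _ => heach i, Finset.prod_const, Finset.card_univ,
      Fintype.card_fin]
    have hsp : Real.sqrt p ^ d ≠ 0 := by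
      have : (0 : ℝ) < Real.sqrt p := Real.sqrt_pos.mpr (by exact_mod_cast hp.pos)
      positivity
    have hpd : (p : ℝ) ^ d = Real.sqrt p ^ d * Real.sqrt p ^ d := by
      rw [← mul_pow, Real.mul_self_sqrt (by positivity)]
    rw [hpd, mul_inv, mul_assoc, inv_mul_cancel₀ hsp, mul_one]
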